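/- arXiv:math/0602532 — 2 statements merged into one kernel-verified Lean document; each statement's English description precedes it below -/
import Mathlib

section
/- Let (Ω, F, P) be a probability space and (f_n)_{n≥1} a sequence of measurable functions f_n : Ω → [0, ∞). Then there exist functions g_n, where each g_n is a finite convex combination of the functions {f_m : m ≥ n}, and a measurable function g : Ω → [0, +∞], such that g_n converges to g P-almost surely as n → ∞. -/
set_option linter.unusedSectionVars false
set_option maxHeartbeats 1000000

open MeasureTheory Filter
open scoped ENNReal NNReal

namespace DSaux
noncomputable section

def u (x : ℝ) : ℝ := 1 - Real.exp (-x)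
def psi (x : ℝ) : ℝ := Real.exp (-x / 2)

lemma u_identity (a b : ℝ) :
    (psi a - psi b) ^ 2 = 2 * u ((a + b) / 2) - u a - u b := by
  have h1 : Real.exp (-((a + b) / 2)) = Real.exp (-a / 2) * Real.exp (-b / 2) := by
    rw [← Real.exp_add]; ring_nf
  have h2 : Real.exp (-a) = Real.exp (-a / 2) * Real.exp (-a / 2) := by
    rw [← Real.exp_add]; ring_nf
  have h3 : Real.exp (-b) = Real.exp (-b / 2) * Real.exp (-b / 2) := by
    rw [← Real.exp_add]; ring_nf
  simp only [u, psi, h1, h2, h3]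
  ring

lemma u_nonneg {x : ℝ} (hx : 0 ≤ x) : 0 ≤ u x := by
  have : Real.exp (-x) ≤ 1 := Real.exp_le_one_iff.mpr (by linarith)
  simp only [u]; linarith

lemma u_le_one (x : ℝ) : u x ≤ 1 := by
  have := Real.exp_pos (-x); simp only [u]; linarith

lemma psi_pos (x : ℝ) : 0 < psi x := Real.exp_pos _

lemma psi_le_one {x : ℝ} (hx : 0 ≤ x) : psi x ≤ 1 :=
  Real.exp_le_one_iff.mpr (by linarith)

lemma u_continuous : Continuous u := by unfold u; continuity
lemma psi_continuous : Continuous psi := by unfold psi; continuity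

lemma log_psi (x : ℝ) : Real.log (psi x) = -x / 2 := Real.log_exp _

lemma sq_diff_le_one {a b : ℝ} (ha : 0 ≤ a) (hb : 0 ≤ b) :
    (psi a - psi b) ^ 2 ≤ 1 := by
  have h1 := psi_pos a; have h2 := psi_pos b
  have h3 := psi_le_one ha; have h4 := psi_le_one hb
  nlinarith

variable {Ω : Type*} [MeasurableSpace Ω]

def K (f : ℕ → Ω → ℝ) (n : ℕ) : Set (Ω → ℝ) :=
  { h | ∃ (k : ℕ) (m : Fin (k + 1) → ℕ) (lam : Fin (k + 1) → ℝ),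
      (∀ i, n ≤ m i) ∧ (∀ i, 0 ≤ lam i) ∧ (∑ i, lam i = 1) ∧
      h = fun ω => ∑ i, lam i * f (m i) ω }

lemma self_mem_K (f : ℕ → Ω → ℝ) {n m : ℕ} (h : n ≤ m) : f m ∈ K f n := by
  refine ⟨0, fun _ => m, fun _ => 1, fun _ => h, fun _ => zero_le_one, by simp, ?_⟩
  funext ω; simp

lemma K_antitone (f : ℕ → Ω → ℝ) {n m : ℕ} (hnm : n ≤ m) : K f m ⊆ K f n := by
  rintro h ⟨k, idx, lam, hidx, hlam, hsum, rfl⟩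
  exact ⟨k, idx, lam, fun i => hnm.trans (hidx i), hlam, hsum, rfl⟩

lemma K_measurable {f : ℕ → Ω → ℝ} (hfmeas : ∀ n, Measurable (f n)) {n : ℕ}
    {h : Ω → ℝ} (hh : h ∈ K f n) : Measurable h := by
  obtain ⟨k, idx, lam, -, -, -, rfl⟩ := hh
  exact Finset.measurable_sum _ fun i _ => (hfmeas (idx i)).const_mul _

lemma K_nonneg {f : ℕ → Ω → ℝ} (hfnonneg : ∀ n ω, 0 ≤ f n ω) {n : ℕ}
    {h : Ω → ℝ} (hh : h ∈ K f n) : ∀ ω, 0 ≤ h ω := by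
  obtain ⟨k, idx, lam, -, hlam, -, rfl⟩ := hh
  intro ω
  exact Finset.sum_nonneg fun i _ => mul_nonneg (hlam i) (hfnonneg _ ω)

lemma K_midpoint {f : ℕ → Ω → ℝ} {n : ℕ} {h1 h2 : Ω → ℝ}
    (H1 : h1 ∈ K f n) (H2 : h2 ∈ K f n) :
    (fun ω => (h1 ω + h2 ω) / 2) ∈ K f n := by
  obtain ⟨k1, m1, l1, hm1, hl1, hs1, rfl⟩ := H1
  obtain ⟨k2, m2, l2, hm2, hl2, hs2, rfl⟩ := H2
  refine ⟨k1 + 1 + k2, (Fin.append m1 m2 : Fin ((k1+1) + (k2+1)) → ℕ),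
    (Fin.append (fun i => l1 i / 2) (fun i => l2 i / 2) : Fin ((k1+1) + (k2+1)) → ℝ),
    ?_, ?_, ?_, ?_⟩
  · intro i
    refine Fin.addCases (motive := fun i => n ≤ Fin.append m1 m2 i) ?_ ?_ i <;>
      intro j <;> simp [Fin.append_left, Fin.append_right, hm1, hm2]
  · intro i
    refine Fin.addCases (motive := fun i =>
      0 ≤ Fin.append (fun i => l1 i / 2) (fun i => l2 i / 2) i) ?_ ?_ i <;>
      intro j <;> simp [Fin.append_left, Fin.append_right]
    · linarith [hl1 j]
    · linarith [hl2 j]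
  · show (∑ i : Fin ((k1+1) + (k2+1)),
      Fin.append (fun i => l1 i / 2) (fun i => l2 i / 2) i) = 1
    rw [Fin.sum_univ_add]
    simp only [Fin.append_left, Fin.append_right]
    rw [← Finset.sum_div, ← Finset.sum_div, hs1, hs2]; norm_num
  · funext ω
    show _ = ∑ i : Fin ((k1+1) + (k2+1)),
      Fin.append (fun i => l1 i / 2) (fun i => l2 i / 2) i * f (Fin.append m1 m2 i) ω
    rw [Fin.sum_univ_add]
    simp only [Fin.append_left, Fin.append_right]
    rw [add_div]
    congr 1 <;> · rw [Finset.sum_div]; apply Finset.sum_congr rfl; intro j _; ring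

variable (P : Measure Ω) [IsProbabilityMeasure P]

lemma bounded_integrable {h : Ω → ℝ} (hm : Measurable h) {c : ℝ}
    (hb : ∀ ω, ‖h ω‖ ≤ c) : Integrable h P :=
  (integrable_const c).mono' hm.aestronglyMeasurable (ae_of_all _ hb)

/-- integral of `u ∘ h` -/
def I (h : Ω → ℝ) : ℝ := ∫ ω, u (h ω) ∂P

lemma integrable_u_comp {h : Ω → ℝ} (hm : Measurable h) (hpos : ∀ ω, 0 ≤ h ω) :
    Integrable (fun ω => u (h ω)) P := by
  refine bounded_integrable P (u_continuous.measurable.comp hm) (c := 1) fun ω => ?_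
  rw [Real.norm_eq_abs, abs_le]
  exact ⟨by linarith [u_nonneg (hpos ω)], u_le_one _⟩

lemma integrable_sq_diff {h1 h2 : Ω → ℝ} (hm1 : Measurable h1) (hm2 : Measurable h2)
    (hp1 : ∀ ω, 0 ≤ h1 ω) (hp2 : ∀ ω, 0 ≤ h2 ω) :
    Integrable (fun ω => (psi (h1 ω) - psi (h2 ω)) ^ 2) P := by
  refine bounded_integrable P ?_ (c := 1) fun ω => ?_
  · exact (((psi_continuous.measurable.comp hm1).sub
      (psi_continuous.measurable.comp hm2)).pow measurable_const)
  · rw [Real.norm_eq_abs, abs_of_nonneg (sq_nonneg _)]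
    exact sq_diff_le_one (hp1 ω) (hp2 ω)

lemma I_nonneg {h : Ω → ℝ} (hpos : ∀ ω, 0 ≤ h ω) : 0 ≤ I P h :=
  integral_nonneg fun ω => u_nonneg (hpos ω)

lemma I_le_one {h : Ω → ℝ} (hm : Measurable h) (hpos : ∀ ω, 0 ≤ h ω) : I P h ≤ 1 := by
  have : I P h ≤ ∫ _ω, (1 : ℝ) ∂P :=
    integral_mono (integrable_u_comp P hm hpos) (integrable_const 1) fun ω => u_le_one _
  simpa using this

/-- the key integral identity -/
lemma key_identity {h1 h2 : Ω → ℝ} (hm1 : Measurable h1) (hm2 : Measurable h2)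
    (hp1 : ∀ ω, 0 ≤ h1 ω) (hp2 : ∀ ω, 0 ≤ h2 ω) :
    ∫ ω, (psi (h1 ω) - psi (h2 ω)) ^ 2 ∂P
      = 2 * I P (fun ω => (h1 ω + h2 ω) / 2) - I P h1 - I P h2 := by
  have hmid : Measurable fun ω => (h1 ω + h2 ω) / 2 := (hm1.add hm2).div_const 2
  have hpmid : ∀ ω, 0 ≤ (h1 ω + h2 ω) / 2 := fun ω => by
    have := hp1 ω; have := hp2 ω; positivity
  have e : (fun ω => (psi (h1 ω) - psi (h2 ω)) ^ 2)
      = fun ω => 2 * u ((h1 ω + h2 ω) / 2) - u (h1 ω) - u (h2 ω) := by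
    funext ω; exact u_identity _ _
  have int0 : Integrable (fun ω => 2 * u ((h1 ω + h2 ω) / 2)) P :=
    (integrable_u_comp P hmid hpmid).const_mul 2
  have int1 : Integrable (fun ω => 2 * u ((h1 ω + h2 ω) / 2) - u (h1 ω)) P :=
    int0.sub (integrable_u_comp P hm1 hp1)
  rw [e, integral_sub int1 (integrable_u_comp P hm2 hp2),
    integral_sub int0 (integrable_u_comp P hm1 hp1), MeasureTheory.integral_const_mul]
  rfl

variable (f : ℕ → Ω → ℝ)

/-- value set -/
def Sset (n : ℕ) : Set ℝ := I P '' K f n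

/-- the decreasing sequence of suprema -/
def s (n : ℕ) : ℝ := sSup (Sset P f n)

variable {f}

lemma Sset_nonempty (n : ℕ) : (Sset P f n).Nonempty :=
  ⟨I P (f n), ⟨f n, self_mem_K f le_rfl, rfl⟩⟩

lemma Sset_bddAbove (hfmeas : ∀ n, Measurable (f n)) (hfnonneg : ∀ n ω, 0 ≤ f n ω)
    (n : ℕ) : BddAbove (Sset P f n) := by
  refine ⟨1, ?_⟩
  rintro r ⟨h, hh, rfl⟩
  exact I_le_one P (K_measurable hfmeas hh) (K_nonneg hfnonneg hh)

lemma I_le_s (hfmeas : ∀ n, Measurable (f n)) (hfnonneg : ∀ n ω, 0 ≤ f n ω)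
    {n : ℕ} {h : Ω → ℝ} (hh : h ∈ K f n) : I P h ≤ s P f n :=
  le_csSup (Sset_bddAbove P hfmeas hfnonneg n) ⟨h, hh, rfl⟩

lemma s_antitone (hfmeas : ∀ n, Measurable (f n)) (hfnonneg : ∀ n ω, 0 ≤ f n ω) :
    Antitone (s P f) := by
  intro n m hnm
  exact csSup_le_csSup (Sset_bddAbove P hfmeas hfnonneg n) (Sset_nonempty P m)
    (Set.image_mono (K_antitone f hnm))

lemma s_nonneg (hfmeas : ∀ n, Measurable (f n)) (hfnonneg : ∀ n ω, 0 ≤ f n ω)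
    (n : ℕ) : 0 ≤ s P f n :=
  le_trans (I_nonneg P (fun ω => hfnonneg n ω)) (I_le_s P hfmeas hfnonneg (self_mem_K f le_rfl))

lemma s_tendsto (hfmeas : ∀ n, Measurable (f n)) (hfnonneg : ∀ n ω, 0 ≤ f n ω) :
    Tendsto (s P f) atTop (nhds (⨅ n, s P f n)) :=
  tendsto_atTop_ciInf (s_antitone P hfmeas hfnonneg)
    ⟨0, by rintro r ⟨n, rfl⟩; exact s_nonneg P hfmeas hfnonneg n⟩

lemma iInf_le_s (hfmeas : ∀ n, Measurable (f n)) (hfnonneg : ∀ n ω, 0 ≤ f n ω)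
    (n : ℕ) : (⨅ n, s P f n) ≤ s P f n :=
  ciInf_le ⟨0, by rintro r ⟨m, rfl⟩; exact s_nonneg P hfmeas hfnonneg m⟩ n

lemma exists_good (n : ℕ) :
    ∃ h ∈ K f n, s P f n - 1 / (n + 1) < I P h := by
  have h1 : s P f n - 1 / (n + 1) < s P f n := by
    have : (0:ℝ) < 1 / (n + 1) := by positivity
    linarith
  obtain ⟨r, ⟨h, hh, rfl⟩, hr⟩ := exists_lt_of_lt_csSup (Sset_nonempty P n) h1
  exact ⟨h, hh, hr⟩

/-- quantitative Cauchy-in-`L²` estimate for the chosen near-optimizers -/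
lemma cauchy_est (hfmeas : ∀ n, Measurable (f n)) (hfnonneg : ∀ n ω, 0 ≤ f n ω)
    (G : ℕ → Ω → ℝ) (hG : ∀ n, G n ∈ K f n)
    (hGI : ∀ n, s P f n - 1 / (n + 1) < I P (G n)) :
    ∀ ε > (0:ℝ), ∃ N, ∀ n ≥ N, ∀ m ≥ N,
      ∫ ω, (psi (G n ω) - psi (G m ω)) ^ 2 ∂P < ε := by
  intro ε hε
  set sinf := ⨅ n, s P f n with hsinf
  obtain ⟨N1, hN1⟩ := eventually_atTop.mp ((tendsto_order.mp (s_tendsto P hfmeas hfnonneg)).2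
    (sinf + ε / 8) (by linarith))
  obtain ⟨N2, hN2⟩ := exists_nat_one_div_lt (show (0:ℝ) < ε / 4 by linarith)
  refine ⟨max N1 N2, fun n hn m hm => ?_⟩
  have hGm : ∀ j, Measurable (G j) := fun j => K_measurable hfmeas (hG j)
  have hGp : ∀ j ω, 0 ≤ G j ω := fun j => K_nonneg hfnonneg (hG j)
  have hmid : (fun ω => (G n ω + G m ω) / 2) ∈ K f (min n m) :=
    K_midpoint (K_antitone f (min_le_left n m) (hG n))
      (K_antitone f (min_le_right n m) (hG m))
  have hIm : I P (fun ω => (G n ω + G m ω) / 2) ≤ s P f (min n m) :=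
    I_le_s P hfmeas hfnonneg hmid
  have hkey := key_identity P (hGm n) (hGm m) (hGp n) (hGp m)
  have hsmin : s P f (min n m) < sinf + ε / 8 := by
    refine hN1 (min n m) ?_
    exact le_min (le_trans (le_max_left _ _) hn) (le_trans (le_max_left _ _) hm)
  have h1n : (1:ℝ) / (n + 1) < ε / 4 := by
    refine lt_of_le_of_lt ?_ hN2
    apply one_div_le_one_div_of_le (by positivity)
    have : N2 ≤ n := le_trans (le_max_right _ _) hn
    exact_mod_cast by exact_mod_cast Nat.add_le_add_right this 1
  have h1m : (1:ℝ) / (m + 1) < ε / 4 := by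
    refine lt_of_le_of_lt ?_ hN2
    apply one_div_le_one_div_of_le (by positivity)
    have : N2 ≤ m := le_trans (le_max_right _ _) hm
    exact_mod_cast by exact_mod_cast Nat.add_le_add_right this 1
  have hsn := hGI n
  have hsm := hGI m
  have hin : sinf ≤ s P f n := iInf_le_s P hfmeas hfnonneg n
  have him : sinf ≤ s P f m := iInf_le_s P hfmeas hfnonneg m
  rw [hkey]
  linarith

/-- pointwise bound `|x| ≤ x²/t + t` -/
lemma abs_le_sq_div_add {x t : ℝ} (ht : 0 < t) : |x| ≤ x ^ 2 / t + t := by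
  rw [div_add' _ _ _ (ne_of_gt ht), le_div_iff₀ ht]
  nlinarith [sq_nonneg (|x| - t), sq_abs x]

/-- the conversion to `ℝ≥0∞`-limits -/
lemma tendsto_ofReal_limit {a : ℕ → ℝ} {c : ℝ}
    (hc : Tendsto (fun k => psi (a k)) atTop (nhds c)) :
    ∃ L, Tendsto (fun k => ENNReal.ofReal (a k)) atTop (nhds L) := by
  have hc0 : 0 ≤ c := ge_of_tendsto' hc fun k => (psi_pos _).le
  rcases eq_or_lt_of_le hc0 with h0 | hpos
  · refine ⟨⊤, ?_⟩
    have h1 : Tendsto (fun k => psi (a k)) atTop (nhdsWithin 0 (Set.Ioi 0)) := by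
      rw [← h0] at hc
      exact tendsto_nhdsWithin_of_tendsto_nhds_of_eventually_within _ hc
        (Eventually.of_forall fun k => psi_pos _)
    have h2 : Tendsto (fun k => Real.log (psi (a k))) atTop atBot :=
      Real.tendsto_log_nhdsGT_zero.comp h1
    have h3 : Tendsto (fun k => (-2 : ℝ) * Real.log (psi (a k))) atTop atTop :=
      (tendsto_const_mul_atTop_of_neg (show (-2:ℝ) < 0 by norm_num)).mpr h2
    have he : (fun k => (-2 : ℝ) * Real.log (psi (a k))) = fun k => a k :=
      funext fun k => by rw [log_psi]; ring
    rw [he] at h3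
    exact ENNReal.tendsto_ofReal_atTop.comp h3
  · refine ⟨ENNReal.ofReal (-2 * Real.log c), ?_⟩
    have h2 : Tendsto (fun k => Real.log (psi (a k))) atTop (nhds (Real.log c)) :=
      (Real.continuousAt_log (ne_of_gt hpos)).tendsto.comp hc
    have h3 : Tendsto (fun k => (-2 : ℝ) * Real.log (psi (a k))) atTop
        (nhds (-2 * Real.log c)) := h2.const_mul _
    have he : (fun k => (-2 : ℝ) * Real.log (psi (a k))) = fun k => a k :=
      funext fun k => by rw [log_psi]; ring
    rw [he] at h3
    exact (ENNReal.continuous_ofReal.tendsto _).comp h3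

end
end DSaux

open DSaux

/-- Delbaen–Schachermayer: for a sequence of nonnegative measurable functions,
there are forward convex combinations converging almost surely (to a possibly
infinite-valued limit). -/
theorem forward_convex_combinations_converge_ae
    {Ω : Type*} [MeasurableSpace Ω] (P : Measure Ω) [IsProbabilityMeasure P]
    (f : ℕ → Ω → ℝ) (hfmeas : ∀ n, Measurable (f n)) (hfnonneg : ∀ n ω, 0 ≤ f n ω) :
    ∃ (g : ℕ → Ω → ℝ) (glim : Ω → ℝ≥0∞),
      Measurable glim ∧
      -- each `g n` is a finite convex combination of the `f m`, `m ≥ n`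
      (∀ n : ℕ, ∃ (k : ℕ) (m : Fin (k + 1) → ℕ) (lam : Fin (k + 1) → ℝ),
        (∀ i, n ≤ m i) ∧ (∀ i, 0 ≤ lam i) ∧ (∑ i, lam i = 1) ∧
        g n = fun ω => ∑ i, lam i * f (m i) ω) ∧
      ∀ᵐ ω ∂P, Tendsto (fun n => ENNReal.ofReal (g n ω)) atTop (nhds (glim ω)) := by
  classical
  choose G hG hGI using fun n => exists_good P (f := f) n
  have cauchy := cauchy_est P hfmeas hfnonneg G hG hGI
  have hquart : ∀ k : ℕ, (0:ℝ) < (1/4)^k := fun k => by positivity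
  choose N hN using fun k => cauchy ((1/4)^k) (hquart k)
  -- a strictly monotone subsequence dominating `N`
  let φ : ℕ → ℕ := fun k => Nat.rec (N 0) (fun k ih => max (ih + 1) (N (k+1))) k
  have hφmono : StrictMono φ := strictMono_nat_of_lt_succ fun k =>
    lt_of_lt_of_le (Nat.lt_succ_self _) (le_max_left _ _)
  have hφN : ∀ k, N k ≤ φ k := by
    intro k; cases k with
    | zero => exact le_refl _
    | succ k => exact le_max_right _ _
  have hφk : ∀ k, k ≤ φ k := fun k => hφmono.le_apply
  set g : ℕ → Ω → ℝ := fun k => G (φ k) with hgdef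
  have hgK : ∀ k, g k ∈ K f k := fun k => K_antitone f (hφk k) (hG (φ k))
  have hgmeas : ∀ k, Measurable (g k) := fun k => K_measurable hfmeas (hgK k)
  have hgpos : ∀ k ω, 0 ≤ g k ω := fun k => K_nonneg hfnonneg (hgK k)
  -- consecutive L² bounds
  have hsq : ∀ k, ∫ ω, (psi (g (k+1) ω) - psi (g k ω)) ^ 2 ∂P < (1/4)^k := by
    intro k
    exact hN k (φ (k+1)) (le_trans (hφN k) (le_of_lt (hφmono (Nat.lt_succ_self k))))
      (φ k) (hφN k)
  -- consecutive L¹ bounds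
  have habs : ∀ k, ∫ ω, |psi (g (k+1) ω) - psi (g k ω)| ∂P ≤ 2 * (1/2)^k := by
    intro k
    have ht : (0:ℝ) < (1/2)^k := by positivity
    have hDmeas : Measurable fun ω => psi (g (k+1) ω) - psi (g k ω) :=
      (psi_continuous.measurable.comp (hgmeas (k+1))).sub
        (psi_continuous.measurable.comp (hgmeas k))
    have hint_sq : Integrable (fun ω => (psi (g (k+1) ω) - psi (g k ω)) ^ 2) P :=
      integrable_sq_diff P (hgmeas (k+1)) (hgmeas k) (hgpos (k+1)) (hgpos k)
    have hint_abs : Integrable (fun ω => |psi (g (k+1) ω) - psi (g k ω)|) P := by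
      refine bounded_integrable P hDmeas.abs (c := 1) fun ω => ?_
      rw [Real.norm_eq_abs, abs_abs, abs_le]
      have h1 := psi_pos (g (k+1) ω); have h2 := psi_pos (g k ω)
      have h3 := psi_le_one (hgpos (k+1) ω); have h4 := psi_le_one (hgpos k ω)
      constructor <;> linarith
    have step1 : ∫ ω, |psi (g (k+1) ω) - psi (g k ω)| ∂P
        ≤ ∫ ω, ((psi (g (k+1) ω) - psi (g k ω)) ^ 2 / (1/2)^k + (1/2)^k) ∂P := by
      refine integral_mono hint_abs ?_ fun ω => abs_le_sq_div_add ht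
      exact (hint_sq.div_const _).add (integrable_const _)
    have step2 : ∫ ω, ((psi (g (k+1) ω) - psi (g k ω)) ^ 2 / (1/2)^k + (1/2)^k) ∂P
        = (∫ ω, (psi (g (k+1) ω) - psi (g k ω)) ^ 2 ∂P) / (1/2)^k + (1/2)^k := by
      rw [integral_add (hint_sq.div_const _) (integrable_const _), integral_div,
        integral_const]
      simp
    have step3 : (∫ ω, (psi (g (k+1) ω) - psi (g k ω)) ^ 2 ∂P) / (1/2)^k ≤ (1/2)^k := by
      rw [div_le_iff₀ ht]
      calc _ ≤ (1/4:ℝ)^k := (hsq k).le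
        _ = (1/2)^k * (1/2)^k := by rw [← mul_pow]; norm_num
    linarith [step1, step2 ▸ step1]
  -- summability of the `L¹` norms, via lintegrals
  set A : ℕ → Ω → ℝ≥0∞ := fun k ω => ENNReal.ofReal |psi (g (k+1) ω) - psi (g k ω)|
    with hAdef
  have hAmeas : ∀ k, Measurable (A k) := by
    intro k
    exact ENNReal.measurable_ofReal.comp
      (((psi_continuous.measurable.comp (hgmeas (k+1))).sub
        (psi_continuous.measurable.comp (hgmeas k))).abs)
  have hAint : ∀ k, ∫⁻ ω, A k ω ∂P = ENNReal.ofReal (∫ ω, |psi (g (k+1) ω) - psi (g k ω)| ∂P) := by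
    intro k
    refine (ofReal_integral_eq_lintegral_ofReal ?_ (ae_of_all _ fun ω => abs_nonneg _)).symm
    refine bounded_integrable P (((psi_continuous.measurable.comp (hgmeas (k+1))).sub
        (psi_continuous.measurable.comp (hgmeas k))).abs) (c := 2) fun ω => ?_
    rw [Real.norm_eq_abs, abs_abs, abs_le]
    have h1 := psi_pos (g (k+1) ω); have h2 := psi_pos (g k ω)
    have h3 := psi_le_one (hgpos (k+1) ω); have h4 := psi_le_one (hgpos k ω)
    constructor <;> linarith
  have hsummable_r : Summable fun k : ℕ => 2 * (1/2:ℝ)^k :=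
    (summable_geometric_of_lt_one (by norm_num) (by norm_num)).mul_left 2
  have htsum_lt : ∑' k, ∫⁻ ω, A k ω ∂P < ⊤ := by
    calc ∑' k, ∫⁻ ω, A k ω ∂P
        ≤ ∑' k, ENNReal.ofReal (2 * (1/2)^k) := by
          refine ENNReal.tsum_le_tsum fun k => ?_
          rw [hAint k]
          exact ENNReal.ofReal_le_ofReal (habs k)
      _ = ENNReal.ofReal (∑' k, 2 * (1/2:ℝ)^k) :=
          (ENNReal.ofReal_tsum_of_nonneg (fun k => by positivity) hsummable_r).symm
      _ < ⊤ := ENNReal.ofReal_lt_top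
  have hae1 : ∀ᵐ ω ∂P, ∑' k, A k ω < ⊤ := by
    refine ae_lt_top (by exact Measurable.ennreal_tsum hAmeas) ?_
    rw [lintegral_tsum fun k => (hAmeas k).aemeasurable]
    exact htsum_lt.ne
  refine ⟨g, fun ω => limsup (fun k => ENNReal.ofReal (g k ω)) atTop, ?_, ?_, ?_⟩
  · exact Measurable.limsup fun k => ENNReal.measurable_ofReal.comp (hgmeas k)
  · intro n
    obtain ⟨k, m, lam, h1, h2, h3, h4⟩ := hgK n
    exact ⟨k, m, lam, h1, h2, h3, h4⟩
  · filter_upwards [hae1] with ω hω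
    have hsummable : Summable fun k => |psi (g (k+1) ω) - psi (g k ω)| := by
      have h1 := ENNReal.summable_toReal hω.ne
      have h2 : (fun k => (A k ω).toReal) = fun k => |psi (g (k+1) ω) - psi (g k ω)| :=
        funext fun k => ENNReal.toReal_ofReal (abs_nonneg _)
      rwa [h2] at h1
    have hcauchy : CauchySeq fun k => psi (g k ω) := by
      refine cauchySeq_of_summable_dist ?_
      simpa [Real.dist_eq, abs_sub_comm] using hsummable
    obtain ⟨c, hc⟩ := cauchySeq_tendsto_of_complete hcauchy
    obtain ⟨L, hL⟩ := tendsto_ofReal_limit hc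
    rwa [hL.limsup_eq]
end

section
/- Let (T_i)_{i≥1} be a sequence of independent nonnegative random variables on a probability space (Ω, F, P) such that T_i is exponentially distributed with mean i², i.e., P(T_i > t) = exp(−t/i²) for all t ≥ 0, and let M^i_t = (t ∧ T_i)/i² − 1_{{T_i ≤ t}}. Then P-almost surely, for every T > 0, the averages (1/n) ∑_{i=1}^n i² M^i_t converge to t uniformly in t ∈ [0, T] as n → ∞; that is, almost surely sup_{0 ≤ t ≤ T} | (1/n) ∑_{i=1}^n (t ∧ T_i − i²·1_{{T_i ≤ t}}) − t | → 0. -/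
open MeasureTheory Filter
open scoped ENNReal NNReal

/-- Pathwise convergence in Example 2.1: almost surely, for every `T > 0`,
the averages `(1/n) ∑_{i=1}^n i² M^i_t = (1/n) ∑_{i=1}^n (t ∧ T_i − i² 1_{T_i ≤ t})`
converge to `t` uniformly in `t ∈ [0, T]`. -/
theorem averages_converge_uniformly_to_identity
    {Ω : Type*} [MeasurableSpace Ω] (P : Measure Ω) [IsProbabilityMeasure P]
    (T : ℕ → Ω → ℝ) (hTmeas : ∀ i, Measurable (T i)) (hTnonneg : ∀ i ω, 0 ≤ T i ω)
    (hTindep : ProbabilityTheory.iIndepFun T P)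
    (hTexp : ∀ i, 1 ≤ i → ∀ t : ℝ, 0 ≤ t →
      P {ω | t < T i ω} = ENNReal.ofReal (Real.exp (-t / (i : ℝ) ^ 2))) :
    ∀ᵐ ω ∂P, ∀ Tmax : ℝ, 0 < Tmax →
      TendstoUniformlyOn
        (fun (n : ℕ) (t : ℝ) => (1 / (n : ℝ)) * ∑ i ∈ Finset.Icc 1 n,
          (min t (T i ω) - (i : ℝ) ^ 2 * if T i ω ≤ t then 1 else 0))
        (fun t => t) atTop (Set.Icc 0 Tmax) := by
  -- Step 1 : Borel–Cantelli.  For each `k : ℕ`, almost surely eventually `T (i+1) ω > k`.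
  have hBC : ∀ k : ℕ, ∀ᵐ ω ∂P, ∀ᶠ i in atTop, ω ∉ {ω | T (i + 1) ω ≤ (k : ℝ)} := by
    intro k
    apply MeasureTheory.ae_eventually_notMem
    -- bound each probability
    have hbound : ∀ i : ℕ, P {ω | T (i + 1) ω ≤ (k : ℝ)} ≤
        ENNReal.ofReal ((k : ℝ) / ((i : ℝ) + 1) ^ 2) := by
      intro i
      have hcast : ((i + 1 : ℕ) : ℝ) = (i : ℝ) + 1 := by push_cast; ring
      have hmeas : MeasurableSet {ω | (k : ℝ) < T (i + 1) ω} :=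
        measurableSet_lt measurable_const (hTmeas (i + 1))
      have hcompl : {ω | T (i + 1) ω ≤ (k : ℝ)} = {ω | (k : ℝ) < T (i + 1) ω}ᶜ := by
        ext ω; simp [not_lt]
      have hP := hTexp (i + 1) (Nat.le_add_left 1 i) (k : ℝ) (Nat.cast_nonneg k)
      rw [hcompl, measure_compl hmeas (measure_ne_top P _), hP, measure_univ]
      set x : ℝ := (k : ℝ) / ((i : ℝ) + 1) ^ 2 with hx
      have hxnonneg : 0 ≤ x := by positivity
      have hxexp : -(k : ℝ) / (((i + 1 : ℕ) : ℝ)) ^ 2 = -x := by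
        rw [hcast, hx]; ring
      rw [hxexp]
      rw [tsub_le_iff_right, ← ENNReal.ofReal_add hxnonneg (Real.exp_nonneg _)]
      have h1 : (1 : ℝ) ≤ x + Real.exp (-x) := by
        have := Real.add_one_le_exp (-x)
        linarith
      calc (1 : ℝ≥0∞) = ENNReal.ofReal 1 := by simp
        _ ≤ ENNReal.ofReal (x + Real.exp (-x)) := ENNReal.ofReal_le_ofReal h1
    refine ne_top_of_le_ne_top ?_ (ENNReal.tsum_le_tsum hbound)
    -- the right-hand side is summable
    have hsum : Summable (fun i : ℕ => (k : ℝ) / ((i : ℝ) + 1) ^ 2) := by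
      have h2 : Summable (fun i : ℕ => 1 / ((i : ℝ)) ^ 2) :=
        Real.summable_one_div_nat_pow.mpr one_lt_two
      have h3 : Summable (fun i : ℕ => 1 / (((i : ℕ) : ℝ) + 1) ^ 2) := by
        have := (summable_nat_add_iff (f := fun i : ℕ => 1 / ((i : ℝ)) ^ 2) 1).mpr h2
        simpa [Nat.cast_add] using this
      simpa [div_eq_mul_inv, one_div] using h3.mul_left (k : ℝ)
    rw [← ENNReal.ofReal_tsum_of_nonneg (fun i => by positivity) hsum]
    exact ENNReal.ofReal_ne_top
  -- combine over all `k`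
  have hae : ∀ᵐ ω ∂P, ∀ k : ℕ, ∀ᶠ i in atTop, ω ∉ {ω | T (i + 1) ω ≤ (k : ℝ)} :=
    ae_all_iff.mpr hBC
  filter_upwards [hae] with ω hω Tmax hTmax
  -- Step 2: only finitely many `T i ω` are `≤ Tmax`.
  obtain ⟨N, hN⟩ := (hω ⌈Tmax⌉₊).exists_forall_of_atTop
  set M := N + 1 with hM
  have hlarge : ∀ i, M ≤ i → Tmax < T i ω := by
    intro i hi
    obtain ⟨j, rfl⟩ : ∃ j, i = j + 1 := ⟨i - 1, by omega⟩
    have hj : N ≤ j := by omega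
    have := hN j hj
    simp only [Set.mem_setOf_eq, not_le] at this
    exact lt_of_le_of_lt (Nat.le_ceil Tmax) this
  -- Step 3: uniform convergence.
  rw [Metric.tendstoUniformlyOn_iff]
  intro ε hε
  set c : ℕ → ℝ := fun i => Tmax + (i : ℝ) ^ 2 with hc
  set C : ℝ := ∑ i ∈ Finset.range M, c i with hC
  have hCnonneg : 0 ≤ C := Finset.sum_nonneg fun i _ => by positivity
  have htend : Tendsto (fun n : ℕ => C / (n : ℝ)) atTop (nhds 0) :=
    tendsto_const_div_atTop_nhds_zero_nat C
  have hev : ∀ᶠ n : ℕ in atTop, C / (n : ℝ) < ε :=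
    (htend.eventually (gt_mem_nhds hε))
  filter_upwards [hev, eventually_ge_atTop 1] with n hn hn1 t ht
  obtain ⟨ht0, htT⟩ := ht
  -- error terms
  set e : ℕ → ℝ := fun i =>
    min t (T i ω) - t - (i : ℝ) ^ 2 * (if T i ω ≤ t then 1 else 0) with he
  have he0 : ∀ i, M ≤ i → e i = 0 := by
    intro i hi
    have h1 : Tmax < T i ω := hlarge i hi
    have h2 : t < T i ω := lt_of_le_of_lt htT h1
    simp [he, min_eq_left h2.le, not_le.mpr h2]
  have hebound : ∀ i, |e i| ≤ c i := by
    intro i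
    have h1 : 0 ≤ min t (T i ω) := le_min ht0 (hTnonneg i ω)
    have h2 : min t (T i ω) ≤ t := min_le_left _ _
    have h3 : (if T i ω ≤ t then (1:ℝ) else 0) ≤ 1 := by split <;> norm_num
    have h4 : (0:ℝ) ≤ (if T i ω ≤ t then (1:ℝ) else 0) := by split <;> norm_num
    have := abs_sub (min t (T i ω) - t) ((i : ℝ) ^ 2 * (if T i ω ≤ t then 1 else 0))
    rw [he]
    have hA : |min t (T i ω) - t| ≤ Tmax := by
      rw [abs_sub_comm, abs_of_nonneg (by linarith)]
      linarith
    have hB : |(i : ℝ) ^ 2 * (if T i ω ≤ t then (1:ℝ) else 0)| ≤ (i : ℝ) ^ 2 := by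
      rw [abs_of_nonneg (by positivity)]
      nlinarith [sq_nonneg (i : ℝ)]
    calc |min t (T i ω) - t - (i : ℝ) ^ 2 * (if T i ω ≤ t then 1 else 0)|
        ≤ |min t (T i ω) - t| + |(i : ℝ) ^ 2 * (if T i ω ≤ t then (1:ℝ) else 0)| :=
          abs_sub _ _
      _ ≤ Tmax + (i : ℝ) ^ 2 := add_le_add hA hB
  -- the sum decomposes
  have hsum : ∑ i ∈ Finset.Icc 1 n,
      (min t (T i ω) - (i : ℝ) ^ 2 * (if T i ω ≤ t then 1 else 0)) =
      (n : ℝ) * t + ∑ i ∈ Finset.Icc 1 n, e i := by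
    have : ∀ i ∈ Finset.Icc 1 n,
        (min t (T i ω) - (i : ℝ) ^ 2 * (if T i ω ≤ t then 1 else 0)) = t + e i := by
      intro i _
      simp [he]; ring
    rw [Finset.sum_congr rfl this, Finset.sum_add_distrib, Finset.sum_const,
      Nat.card_Icc]
    simp
  -- bound the error sum
  have hE : |∑ i ∈ Finset.Icc 1 n, e i| ≤ C := by
    have hsub : ∑ i ∈ Finset.Icc 1 n, e i =
        ∑ i ∈ Finset.Icc 1 n ∩ Finset.range M, e i := by
      refine (Finset.sum_subset (Finset.inter_subset_left) ?_).symm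
      intro i hi1 hi2
      have hMi : M ≤ i := by
        by_contra h
        exact hi2 (Finset.mem_inter.mpr ⟨hi1, Finset.mem_range.mpr (not_le.mp h)⟩)
      exact he0 i hMi
    calc |∑ i ∈ Finset.Icc 1 n, e i|
        = |∑ i ∈ Finset.Icc 1 n ∩ Finset.range M, e i| := by rw [hsub]
      _ ≤ ∑ i ∈ Finset.Icc 1 n ∩ Finset.range M, |e i| :=
          Finset.abs_sum_le_sum_abs _ _
      _ ≤ ∑ i ∈ Finset.Icc 1 n ∩ Finset.range M, c i :=
          Finset.sum_le_sum fun i _ => hebound i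
      _ ≤ C := Finset.sum_le_sum_of_subset_of_nonneg Finset.inter_subset_right
          (fun i _ _ => by positivity)
  -- conclude
  have hnpos : (0:ℝ) < (n : ℝ) := by exact_mod_cast Nat.lt_of_lt_of_le Nat.zero_lt_one hn1
  rw [Real.dist_eq, hsum]
  have hiden : t - (1/(n:ℝ)) * ((n:ℝ) * t + ∑ i ∈ Finset.Icc 1 n, e i) =
      -(∑ i ∈ Finset.Icc 1 n, e i) / (n : ℝ) := by
    field_simp
    ring
  rw [hiden, abs_div, abs_neg, abs_of_pos hnpos]
  calc |∑ i ∈ Finset.Icc 1 n, e i| / (n : ℝ) ≤ C / (n : ℝ) :=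
        (div_le_div_iff_of_pos_right hnpos).mpr hE
    _ < ε := hn
end
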